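/- For any prime power q = p^α ≤ N (p prime), the probability that the order of a uniformly random permutation of {1,...,N} is NOT divisible by q equals ∏_{j=1}^{⌊N/q⌋} (1 − 1/(jq)). -/

import Mathlib

open scoped Classical

set_option linter.unusedSectionVars false

namespace ProbAux

open Equiv Equiv.Perm Function Finset

variable {β : Type*} [DecidableEq β] [Fintype β]

lemma mem_pp (π : Equiv.Perm β) (x : β) : x ∈ periodicPts ⇑π := by
  refine mk_mem_periodicPts (orderOf_pos π) ?_
  rw [IsPeriodicPt, Equiv.Perm.iterate_eq_pow, pow_orderOf_eq_one]
  rfl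

lemma mp_pos (π : Equiv.Perm β) (x : β) : 0 < minimalPeriod ⇑π x :=
  minimalPeriod_pos_of_mem_periodicPts (mem_pp π x)

lemma isPeriodicPt_iff_pow (π : Equiv.Perm β) (k : ℕ) (x : β) :
    IsPeriodicPt ⇑π k x ↔ (π ^ k) x = x := by
  rw [IsPeriodicPt, Equiv.Perm.iterate_eq_pow]; rfl

lemma mp_dvd_orderOf (π : Equiv.Perm β) (x : β) : minimalPeriod ⇑π x ∣ orderOf π := by
  refine IsPeriodicPt.minimalPeriod_dvd ?_
  rw [isPeriodicPt_iff_pow, pow_orderOf_eq_one]; rfl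

lemma sameCycle_of_pow {π : Equiv.Perm β} {x y : β} {k : ℕ} (h : (π ^ k) x = y) :
    π.SameCycle x y := ⟨(k : ℤ), by simpa using h⟩

lemma mp_eq_of_sameCycle {π : Equiv.Perm β} {x y : β} (h : π.SameCycle x y) :
    minimalPeriod ⇑π x = minimalPeriod ⇑π y := by
  obtain ⟨k, -, rfl⟩ := h.exists_pow_eq'
  have := (minimalPeriod_apply_iterate (mem_pp π x) k).symm
  rwa [Equiv.Perm.iterate_eq_pow] at this

lemma prime_pow_dvd_lcm_nat {p α u v : ℕ} (hp : p.Prime) (hu : u ≠ 0) (hv : v ≠ 0)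
    (h : p ^ α ∣ Nat.lcm u v) : p ^ α ∣ u ∨ p ^ α ∣ v := by
  rw [hp.pow_dvd_iff_le_factorization (Nat.lcm_ne_zero hu hv),
    Nat.factorization_lcm hu hv] at h
  simp only [Finsupp.sup_apply, le_sup_iff] at h
  rcases h with h | h
  · exact Or.inl ((hp.pow_dvd_iff_le_factorization hu).mpr h)
  · exact Or.inr ((hp.pow_dvd_iff_le_factorization hv).mpr h)

lemma lcm_pos (s : Finset β) (f : β → ℕ) (hf : ∀ b, 0 < f b) : s.lcm f ≠ 0 := by
  induction s using Finset.induction_on with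
  | empty => simp
  | @insert a s' ha ih =>
    rw [Finset.lcm_insert, lcm_eq_nat_lcm]
    exact Nat.lcm_ne_zero (hf a).ne' ih

lemma pow_dvd_of_dvd_lcm {p α : ℕ} (hp : p.Prime) (hα : 1 ≤ α) (s : Finset β) (f : β → ℕ)
    (hf : ∀ b, 0 < f b) (h : p ^ α ∣ s.lcm f) : ∃ b ∈ s, p ^ α ∣ f b := by
  induction s using Finset.induction_on with
  | empty =>
    exfalso
    rw [Finset.lcm_empty, Nat.dvd_one] at h
    exact absurd h (Nat.one_lt_pow (by omega) hp.one_lt).ne'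
  | @insert a s' ha ih =>
    rw [Finset.lcm_insert, lcm_eq_nat_lcm] at h
    rcases prime_pow_dvd_lcm_nat hp (hf a).ne' (lcm_pos s' f hf) h with h | h
    · exact ⟨a, Finset.mem_insert_self a s', h⟩
    · obtain ⟨b, hb, hb'⟩ := ih h
      exact ⟨b, Finset.mem_insert_of_mem hb, hb'⟩

lemma pow_dvd_orderOf_iff {p α : ℕ} (hp : p.Prime) (hα : 1 ≤ α) (π : Equiv.Perm β) :
    p ^ α ∣ orderOf π ↔ ∃ x, p ^ α ∣ minimalPeriod ⇑π x := by
  constructor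
  · intro h
    have hord : orderOf π ∣ Finset.univ.lcm fun x => minimalPeriod ⇑π x := by
      refine orderOf_dvd_of_pow_eq_one ?_
      ext x
      have : IsPeriodicPt ⇑π (Finset.univ.lcm fun x => minimalPeriod ⇑π x) x :=
        isPeriodicPt_iff_minimalPeriod_dvd.mpr (Finset.dvd_lcm (Finset.mem_univ x))
      rw [isPeriodicPt_iff_pow] at this
      simpa using this
    obtain ⟨b, -, hb⟩ := pow_dvd_of_dvd_lcm hp hα Finset.univ _ (mp_pos π) (h.trans hord)
    exact ⟨b, hb⟩
  · rintro ⟨x, hx⟩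
    exact hx.trans (mp_dvd_orderOf π x)

variable {β : Type*} [DecidableEq β] [Fintype β]

lemma conj_pow_apply (σ e : Equiv.Perm β) (k : ℕ) (x : β) :
    ((σ * e * σ⁻¹) ^ k) (σ x) = σ ((e ^ k) x) := by
  rw [conj_pow]
  simp [Equiv.Perm.mul_apply]

lemma mp_conj (σ e : Equiv.Perm β) (x : β) :
    minimalPeriod ⇑(σ * e * σ⁻¹) (σ x) = minimalPeriod ⇑e x := by
  rw [minimalPeriod_eq_minimalPeriod_iff]
  intro n
  rw [IsPeriodicPt, IsPeriodicPt, Equiv.Perm.iterate_eq_pow, Equiv.Perm.iterate_eq_pow]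
  show ((σ * e * σ⁻¹) ^ n) (σ x) = σ x ↔ (e ^ n) x = x
  rw [conj_pow_apply]
  exact ⟨fun h => σ.injective h, fun h => by rw [h]⟩

lemma sameCycle_conj (σ e : Equiv.Perm β) (x y : β) :
    (σ * e * σ⁻¹).SameCycle (σ x) (σ y) ↔ e.SameCycle x y := by
  constructor
  · rintro ⟨i, hi⟩
    refine ⟨i, σ.injective ?_⟩
    rw [← hi, conj_zpow]
    simp [Equiv.Perm.mul_apply]
  · rintro ⟨i, hi⟩
    refine ⟨i, ?_⟩
    rw [conj_zpow]
    simp [Equiv.Perm.mul_apply, hi]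


section decompose

variable {n : ℕ} (e : Equiv.Perm (Fin n)) (p' : Fin n)

lemma pi_zero : (Equiv.Perm.decomposeFin.symm (p'.succ, e)) 0 = p'.succ :=
  Equiv.Perm.decomposeFin_symm_apply_zero p'.succ e

lemma pi_succ (z : Fin n) :
    (Equiv.Perm.decomposeFin.symm (p'.succ, e)) z.succ =
      if e z = p' then 0 else (e z).succ := by
  rw [Equiv.Perm.decomposeFin_symm_apply_succ]
  by_cases h : e z = p'
  · simp [h, Equiv.swap_apply_right]
  · rw [Equiv.swap_apply_of_ne_of_ne (Fin.succ_ne_zero (e z))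
      (fun hc => h (Fin.succ_injective _ hc))]
    simp [h]

lemma pi_iter_succ (k : ℕ) (z : Fin n) (h : ∀ i, 0 < i → i ≤ k → (e ^ i) z ≠ p') :
    ((Equiv.Perm.decomposeFin.symm (p'.succ, e)) ^ k) z.succ = ((e ^ k) z).succ := by
  induction k with
  | zero => simp
  | succ k ih =>
    rw [pow_succ', Equiv.Perm.mul_apply,
      ih (fun i hi hik => h i hi (hik.trans (Nat.le_succ k))), pi_succ]
    have : e ((e ^ k) z) = (e ^ (k + 1)) z := by
      rw [pow_succ']; rfl
    rw [this, if_neg (h (k + 1) (Nat.succ_pos k) le_rfl)]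

lemma pi_iter_zero (k : ℕ) (h : k < Function.minimalPeriod ⇑e p') :
    ((Equiv.Perm.decomposeFin.symm (p'.succ, e)) ^ (k + 1)) 0 = ((e ^ k) p').succ := by
  induction k with
  | zero => simpa using pi_zero e p'
  | succ k ih =>
    rw [pow_succ', Equiv.Perm.mul_apply, ih (Nat.lt_of_succ_lt h), pi_succ]
    have h2 : e ((e ^ k) p') = (e ^ (k + 1)) p' := by rw [pow_succ']; rfl
    rw [h2, if_neg]
    intro hc
    have : IsPeriodicPt ⇑e (k + 1) p' := (isPeriodicPt_iff_pow e (k+1) p').mpr hc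
    have hdvd := this.minimalPeriod_dvd
    have := Nat.le_of_dvd (Nat.succ_pos k) hdvd
    omega

lemma pow_mp_apply : (e ^ (Function.minimalPeriod ⇑e p')) p' = p' := by
  have := Function.iterate_minimalPeriod (f := ⇑e) (x := p')
  rwa [Equiv.Perm.iterate_eq_pow] at this

lemma mp_pi_zero :
    Function.minimalPeriod ⇑(Equiv.Perm.decomposeFin.symm (p'.succ, e)) 0 =
      Function.minimalPeriod ⇑e p' + 1 := by
  set ℓ := Function.minimalPeriod ⇑e p' with hℓdef
  have hℓ : 0 < ℓ := mp_pos e p'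
  have hiter : ∀ t, 0 < t → t ≤ ℓ →
      ((Equiv.Perm.decomposeFin.symm (p'.succ, e)) ^ t) 0 = ((e ^ (t-1)) p').succ := by
    intro t ht ht'
    have h1 : t - 1 + 1 = t := Nat.succ_pred_eq_of_pos ht
    have := pi_iter_zero e p' (t - 1) (by omega)
    rwa [h1] at this
  have hper : ((Equiv.Perm.decomposeFin.symm (p'.succ, e)) ^ (ℓ + 1)) 0 = 0 := by
    rw [pow_succ', Equiv.Perm.mul_apply, hiter ℓ hℓ le_rfl, pi_succ]
    have h2 : e ((e ^ (ℓ-1)) p') = (e ^ ℓ) p' := by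
      conv_rhs => rw [← Nat.succ_pred_eq_of_pos hℓ]
      rw [pow_succ']; rfl
    rw [h2, if_pos (pow_mp_apply e p')]
  have hperiodic : IsPeriodicPt ⇑(Equiv.Perm.decomposeFin.symm (p'.succ, e)) (ℓ+1) 0 :=
    (isPeriodicPt_iff_pow _ _ _).mpr hper
  have hdvd := hperiodic.minimalPeriod_dvd
  set t := Function.minimalPeriod ⇑(Equiv.Perm.decomposeFin.symm (p'.succ, e)) 0 with htdef
  have htpos : 0 < t := mp_pos _ _
  have hne : ¬ t ≤ ℓ := by
    intro hle
    have hp : ((Equiv.Perm.decomposeFin.symm (p'.succ, e)) ^ t) 0 = 0 := by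
      have := Function.isPeriodicPt_minimalPeriod ⇑(Equiv.Perm.decomposeFin.symm (p'.succ, e)) 0
      rw [isPeriodicPt_iff_pow] at this
      exact this
    rw [hiter t htpos hle] at hp
    exact Fin.succ_ne_zero _ hp
  have := Nat.le_of_dvd (Nat.succ_pos ℓ) hdvd
  omega

lemma off_cycle_ne (z : Fin n) (h : ¬ e.SameCycle p' z) (i : ℕ) : (e ^ i) z ≠ p' :=
  fun hc => h (sameCycle_of_pow hc).symm

lemma mp_pi_succ_off (z : Fin n) (h : ¬ e.SameCycle p' z) :
    Function.minimalPeriod ⇑(Equiv.Perm.decomposeFin.symm (p'.succ, e)) z.succ =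
      Function.minimalPeriod ⇑e z := by
  rw [Function.minimalPeriod_eq_minimalPeriod_iff]
  intro k
  rw [isPeriodicPt_iff_pow, isPeriodicPt_iff_pow,
    pi_iter_succ e p' k z (fun i _ _ => off_cycle_ne e p' z h i)]
  exact ⟨fun hc => Fin.succ_injective _ hc, fun hc => by rw [hc]⟩

lemma sameCycle_pi_zero_succ (z : Fin n) :
    (Equiv.Perm.decomposeFin.symm (p'.succ, e)).SameCycle 0 z.succ ↔ e.SameCycle p' z := by
  set ℓ := Function.minimalPeriod ⇑e p' with hℓ
  have hℓpos : 0 < ℓ := mp_pos e p'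
  constructor
  · intro h
    obtain ⟨k, -, hk⟩ := h.exists_pow_eq'
    have hmp := mp_pi_zero e p'
    have hmod : ((Equiv.Perm.decomposeFin.symm (p'.succ, e)) ^ (k % (ℓ+1))) 0 = z.succ := by
      have h2 := Function.iterate_mod_minimalPeriod_eq
        (f := ⇑(Equiv.Perm.decomposeFin.symm (p'.succ, e))) (x := (0 : Fin (n+1))) (n := k)
      rw [hmp, ← hℓ, Equiv.Perm.iterate_eq_pow, Equiv.Perm.iterate_eq_pow] at h2
      rw [h2]
      exact hk
    set k' := k % (ℓ+1) with hk'
    have hk'lt : k' < ℓ + 1 := Nat.mod_lt _ (by omega)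
    rcases Nat.eq_zero_or_pos k' with h0 | hpos
    · rw [h0, pow_zero] at hmod
      exact absurd hmod.symm (Fin.succ_ne_zero z)
    · have h3 := pi_iter_zero e p' (k' - 1) (by omega)
      have h4 : k' - 1 + 1 = k' := by omega
      rw [h4] at h3
      rw [h3] at hmod
      exact sameCycle_of_pow (Fin.succ_injective _ hmod)
  · intro h
    obtain ⟨i, -, hi⟩ := h.exists_pow_eq'
    have hmod : (e ^ (i % ℓ)) p' = z := by
      have h2 := Function.iterate_mod_minimalPeriod_eq (f := ⇑e) (x := p') (n := i)
      rw [Equiv.Perm.iterate_eq_pow, Equiv.Perm.iterate_eq_pow, ← hℓ] at h2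
      rw [h2]
      exact hi
    have h3 := pi_iter_zero e p' (i % ℓ) (Nat.mod_lt _ hℓpos)
    rw [hmod] at h3
    exact sameCycle_of_pow h3

lemma pi0_zero : (Equiv.Perm.decomposeFin.symm ((0 : Fin (n+1)), e)) 0 = 0 :=
  Equiv.Perm.decomposeFin_symm_apply_zero 0 e

lemma pi0_succ (z : Fin n) :
    (Equiv.Perm.decomposeFin.symm ((0 : Fin (n+1)), e)) z.succ = (e z).succ := by
  rw [Equiv.Perm.decomposeFin_symm_apply_succ, Equiv.swap_self]
  rfl

lemma pi0_iter_succ (k : ℕ) (z : Fin n) :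
    ((Equiv.Perm.decomposeFin.symm ((0 : Fin (n+1)), e)) ^ k) z.succ = ((e ^ k) z).succ := by
  induction k with
  | zero => simp
  | succ k ih =>
    rw [pow_succ', Equiv.Perm.mul_apply, ih, pi0_succ]
    congr 1
    rw [pow_succ']
    rfl

lemma mp_pi0_zero :
    Function.minimalPeriod ⇑(Equiv.Perm.decomposeFin.symm ((0 : Fin (n+1)), e)) 0 = 1 :=
  Function.minimalPeriod_eq_one_iff_isFixedPt.mpr (pi0_zero e)

lemma mp_pi0_succ (z : Fin n) :
    Function.minimalPeriod ⇑(Equiv.Perm.decomposeFin.symm ((0 : Fin (n+1)), e)) z.succ =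
      Function.minimalPeriod ⇑e z := by
  rw [Function.minimalPeriod_eq_minimalPeriod_iff]
  intro k
  rw [isPeriodicPt_iff_pow, isPeriodicPt_iff_pow, pi0_iter_succ]
  exact ⟨fun hc => Fin.succ_injective _ hc, fun hc => by rw [hc]⟩

lemma not_sameCycle_pi0 (z : Fin n) :
    ¬ (Equiv.Perm.decomposeFin.symm ((0 : Fin (n+1)), e)).SameCycle 0 z.succ := by
  rintro ⟨i, hi⟩
  rw [Equiv.Perm.zpow_apply_eq_self_of_apply_eq_self (pi0_zero e)] at hi
  exact Fin.succ_ne_zero z hi.symm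

end decompose
section counting

lemma mp_one {β : Type*} (x : β) : Function.minimalPeriod ⇑(1 : Equiv.Perm β) x = 1 := by
  rw [Equiv.Perm.coe_one, Function.minimalPeriod_id]

variable (q : ℕ)

def GoodP {β : Type*} (π : Equiv.Perm β) : Prop :=
  ∀ x, ¬ q ∣ Function.minimalPeriod ⇑π x

def CondP (j : ℕ) {β : Type*} (π : Equiv.Perm β) (x₀ : β) : Prop :=
  (∀ y, ¬ π.SameCycle x₀ y → ¬ q ∣ Function.minimalPeriod ⇑π y) ∧
    ¬ q ∣ (Function.minimalPeriod ⇑π x₀ + j)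

noncomputable def Acount (n : ℕ) : ℕ :=
  (Finset.univ.filter fun π : Equiv.Perm (Fin n) => GoodP q π).card

noncomputable def Hcount (m j : ℕ) : ℕ :=
  (Finset.univ.filter fun π : Equiv.Perm (Fin (m+1)) => CondP q j π 0).card

lemma card_filter_equiv {γ δ : Type*} [Fintype γ] [Fintype δ] (E : γ ≃ δ) (P : δ → Prop) :
    (Finset.univ.filter fun d => P d).card = (Finset.univ.filter fun c => P (E c)).card := by
  rw [← Fintype.card_subtype, ← Fintype.card_subtype]
  exact Fintype.card_congr ((E.subtypeEquiv (fun c => Iff.rfl)).symm)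

lemma card_filter_iff {γ : Type*} [Fintype γ] {P Q : γ → Prop} (h : ∀ x, P x ↔ Q x) :
    (Finset.univ.filter P).card = (Finset.univ.filter Q).card := by
  rw [← Fintype.card_subtype, ← Fintype.card_subtype]
  exact Fintype.card_congr (Equiv.subtypeEquivRight h)


lemma card_filter_false {γ : Type*} [Fintype γ] {P : γ → Prop} (h : ∀ x, ¬ P x) :
    (Finset.univ.filter P).card = 0 := by
  rw [← Fintype.card_subtype]
  exact Fintype.card_eq_zero_iff.mpr ⟨fun x => h x.1 x.2⟩

lemma card_filter_true {γ : Type*} [Fintype γ] {P : γ → Prop} (h : ∀ x, P x) :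
    (Finset.univ.filter P).card = Fintype.card γ := by
  rw [← Fintype.card_subtype]
  exact Fintype.card_congr (Equiv.subtypeUnivEquiv h)

lemma card_filter_iff' {γ : Type*} [Fintype γ] {P Q : γ → Prop} [DecidablePred P]
    [DecidablePred Q] (h : ∀ x, P x ↔ Q x) :
    (Finset.univ.filter P).card = (Finset.univ.filter Q).card := by
  rw [← Fintype.card_subtype, ← Fintype.card_subtype]
  exact Fintype.card_congr (Equiv.subtypeEquivRight h)

lemma card_filter_prod {γ δ : Type*} [Fintype γ] [Fintype δ] (P : γ × δ → Prop) :
    (Finset.univ.filter fun x : γ × δ => P x).card =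
      ∑ c : γ, (Finset.univ.filter fun d => P (c, d)).card := by
  rw [← Fintype.card_subtype,
    Fintype.card_congr (Equiv.subtypeProdEquivSigmaSubtype (fun c d => P (c, d))),
    Fintype.card_sigma]
  congr 1
  funext c
  rw [Fintype.card_subtype]

lemma condP_conj {β : Type*} [DecidableEq β] [Fintype β] (j : ℕ) (σ f : Equiv.Perm β) (x₀ : β) :
    CondP q j (σ * f * σ⁻¹) (σ x₀) ↔ CondP q j f x₀ := by
  unfold CondP
  rw [mp_conj]
  refine and_congr ?_ Iff.rfl
  constructor
  · intro h y hy
    have := h (σ y) (fun hc => hy ((sameCycle_conj σ f x₀ y).mp hc))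
    rwa [mp_conj] at this
  · intro h y hy
    have hy' : ¬ f.SameCycle x₀ (σ⁻¹ y) := fun hc => hy (by
      have := (sameCycle_conj σ f x₀ (σ⁻¹ y)).mpr hc
      simpa using this)
    have h1 := h (σ⁻¹ y) hy'
    have h2 := mp_conj σ f (σ⁻¹ y)
    rw [show σ (σ⁻¹ y) = y from σ.apply_symm_apply y] at h2
    rwa [← h2] at h1

lemma card_cond_conj {m : ℕ} (j : ℕ) (p₀ : Fin (m+1)) :
    (Finset.univ.filter fun f : Equiv.Perm (Fin (m+1)) => CondP q j f p₀).card
      = Hcount q m j := by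
  unfold Hcount
  set σ := Equiv.swap (0 : Fin (m+1)) p₀ with hσ
  rw [card_filter_equiv (MulAut.conj σ).toEquiv (fun f => CondP q j f p₀)]
  apply card_filter_iff
  intro f
  have h0 : σ 0 = p₀ := Equiv.swap_apply_left 0 p₀
  have : CondP q j (σ * f * σ⁻¹) (σ 0) ↔ CondP q j f 0 := condP_conj q j σ f 0
  rw [h0] at this
  exact this

lemma acount_succ_eq (m : ℕ) : Acount q (m+1) = Hcount q m 0 := by
  apply card_filter_iff
  intro π
  constructor
  · intro h
    exact ⟨fun y _ => h y, by simpa using h 0⟩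
  · rintro ⟨h1, h2⟩ x
    by_cases hx : π.SameCycle 0 x
    · rw [← mp_eq_of_sameCycle hx]
      simpa using h2
    · exact h1 x hx

lemma hcount_zero (j : ℕ) : Hcount q 0 j = if q ∣ (1 + j) then 0 else 1 := by
  unfold Hcount
  have hiff : ∀ π : Equiv.Perm (Fin 1), CondP q j π 0 ↔ ¬ q ∣ (1 + j) := by
    intro π
    have hπ : π = 1 := Subsingleton.elim π 1
    subst hπ
    unfold CondP
    constructor
    · rintro ⟨-, h2⟩
      rwa [mp_one] at h2
    · intro h
      refine ⟨fun y hy => ?_, by rwa [mp_one]⟩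
      exfalso
      apply hy
      have : y = 0 := Subsingleton.elim y 0
      rw [this]
  by_cases hd : q ∣ (1 + j)
  · rw [if_pos hd]
    exact card_filter_false (fun x hc => ((hiff x).mp hc) hd)
  · rw [if_neg hd, card_filter_true (fun x => (hiff x).mpr hd)]
    simp [Fintype.card_perm]

lemma hcount_succ (m j : ℕ) :
    Hcount q (m+1) j = (if q ∣ (j+1) then 0 else Acount q (m+1)) + (m+1) * Hcount q m (j+1) := by
  unfold Hcount
  rw [card_filter_equiv (Equiv.Perm.decomposeFin).symm
    (fun π : Equiv.Perm (Fin (m+2)) => CondP q j π 0)]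
  rw [card_filter_prod (fun a : Fin (m+2) × Equiv.Perm (Fin (m+1)) =>
    CondP q j (Equiv.Perm.decomposeFin.symm a) 0)]
  rw [Fin.sum_univ_succ]
  congr 1
  · -- p = 0 term
    have hiff : ∀ f : Equiv.Perm (Fin (m+1)),
        CondP q j (Equiv.Perm.decomposeFin.symm ((0 : Fin (m+2)), f)) 0 ↔
          (¬ q ∣ (j+1)) ∧ GoodP q f := by
      intro f
      unfold CondP GoodP
      constructor
      · rintro ⟨h1, h2⟩
        rw [mp_pi0_zero, Nat.add_comm 1 j] at h2
        refine ⟨h2, fun z => ?_⟩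
        have := h1 z.succ (not_sameCycle_pi0 f z)
        rwa [mp_pi0_succ] at this
      · rintro ⟨h2, h1⟩
        constructor
        · intro y hy
          induction y using Fin.cases with
          | zero => exact absurd (Equiv.Perm.SameCycle.refl _ _) hy
          | succ z => rw [mp_pi0_succ]; exact h1 z
        · rwa [mp_pi0_zero, Nat.add_comm 1 j]
    by_cases hd : q ∣ (j+1)
    · rw [if_pos hd]
      exact card_filter_false (fun x hc => ((hiff x).mp hc).1 hd)
    · rw [if_neg hd]
      unfold Acount
      refine card_filter_iff (fun f => ?_)
      rw [hiff f]
      exact ⟨fun h => h.2, fun h => ⟨hd, h⟩⟩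
  · -- succ terms
    have hterm : ∀ p' : Fin (m+1),
        (Finset.univ.filter fun f : Equiv.Perm (Fin (m+1)) =>
          CondP q j (Equiv.Perm.decomposeFin.symm (p'.succ, f)) 0).card
          = Hcount q m (j+1) := by
      intro p'
      rw [← card_cond_conj q (j+1) p']
      apply card_filter_iff
      intro f
      unfold CondP
      constructor
      · rintro ⟨h1, h2⟩
        rw [mp_pi_zero] at h2
        refine ⟨fun z hz => ?_, by rwa [Nat.add_right_comm] at h2⟩
        have := h1 z.succ (fun hc => hz ((sameCycle_pi_zero_succ f p' z).mp hc))
        rwa [mp_pi_succ_off f p' z hz] at this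
      · rintro ⟨h1, h2⟩
        constructor
        · intro y hy
          induction y using Fin.cases with
          | zero => exact absurd (Equiv.Perm.SameCycle.refl _ _) hy
          | succ z =>
            have hz : ¬ f.SameCycle p' z :=
              fun hc => hy ((sameCycle_pi_zero_succ f p' z).mpr hc)
            rw [mp_pi_succ_off f p' z hz]
            exact h1 z hz
        · rw [mp_pi_zero, Nat.add_right_comm]
          exact h2
    calc ∑ p' : Fin (m+1), (Finset.univ.filter fun f : Equiv.Perm (Fin (m+1)) =>
            CondP q j (Equiv.Perm.decomposeFin.symm (Fin.succ p', f)) 0).card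
        = ∑ _p' : Fin (m+1), Hcount q m (j+1) := by
          exact Finset.sum_congr rfl (fun p' _ => hterm p')
      _ = (m+1) * Hcount q m (j+1) := by
          rw [Finset.sum_const, Finset.card_univ, Fintype.card_fin, smul_eq_mul]

end counting

section realside

variable (q : ℕ)

noncomputable def Gprod (t : ℕ) : ℝ := ∏ j ∈ Finset.Icc 1 t, (1 - 1 / ((j : ℝ) * (q : ℝ)))

lemma Gprod_zero : Gprod q 0 = 1 := by simp [Gprod]

lemma Gprod_succ (t : ℕ) :
    Gprod q (t+1) = Gprod q t * (1 - 1 / (((t:ℝ)+1) * q)) := by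
  rw [Gprod, Gprod, Finset.prod_Icc_succ_top (by omega)]
  push_cast
  ring

lemma sum_G_mul (hq2 : 2 ≤ q) (M : ℕ) :
    ((q:ℝ) - 1) * ∑ t ∈ Finset.range M, Gprod q t = (M : ℝ) * q * Gprod q M := by
  have hq0 : (0:ℝ) < q := by exact_mod_cast (by omega : 0 < q)
  induction M with
  | zero => simp
  | succ M ih =>
    rw [Finset.sum_range_succ, mul_add, ih, Gprod_succ]
    have hne : ((M:ℝ)+1) * q ≠ 0 := by positivity
    push_cast
    field_simp
    ring

lemma blocksum (hq2 : 2 ≤ q) (r : ℕ) (hr : r < q) (M : ℕ) :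
    ∑ s ∈ Finset.range (q*M), (if s % q = r then (0:ℝ) else Gprod q (s / q)) =
      ((q:ℝ) - 1) * ∑ t ∈ Finset.range M, Gprod q t := by
  have hq0 : 0 < q := by omega
  induction M with
  | zero => simp
  | succ M ih =>
    have h1 : q*(M+1) = q*M + q := by ring
    rw [h1, Finset.sum_range_add, ih, Finset.sum_range_succ, mul_add]
    congr 1
    have hterm : ∀ u ∈ Finset.range q,
        (if (q*M + u) % q = r then (0:ℝ) else Gprod q ((q*M + u) / q)) =
          (Gprod q M - if u = r then Gprod q M else 0) := by
      intro u hu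
      rw [Finset.mem_range] at hu
      have hmod : (q*M + u) % q = u := by
        rw [Nat.mul_add_mod, Nat.mod_eq_of_lt hu]
      have hdiv : (q*M + u) / q = M := by
        rw [Nat.mul_add_div hq0, Nat.div_eq_of_lt hu, Nat.add_zero]
      rw [hmod, hdiv]
      by_cases h : u = r <;> simp [h]
    rw [Finset.sum_congr rfl hterm, Finset.sum_sub_distrib, Finset.sum_const,
      Finset.card_range, Finset.sum_ite_eq' (Finset.range q) r (fun _ => Gprod q M),
      if_pos (Finset.mem_range.mpr hr)]
    push_cast
    ring

lemma lemA (hq2 : 2 ≤ q) (m : ℕ) :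
    ∑ s ∈ Finset.range m, (if q ∣ (m - s) then (0:ℝ) else Gprod q (s / q)) =
      (m : ℝ) * Gprod q (m / q) := by
  have hq0 : 0 < q := by omega
  set M := m / q with hM
  set r := m % q with hr
  have hmr : q * M + r = m := Nat.div_add_mod m q
  have hrq : r < q := Nat.mod_lt m hq0
  have hstep1 : ∀ s ∈ Finset.range m,
      (if q ∣ (m - s) then (0:ℝ) else Gprod q (s / q)) =
        (if s % q = r then (0:ℝ) else Gprod q (s / q)) := by
    intro s hs
    rw [Finset.mem_range] at hs
    refine if_congr ?_ rfl rfl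
    rw [← Nat.modEq_iff_dvd' hs.le]
    exact ⟨fun h => h, fun h => h⟩
  rw [Finset.sum_congr rfl hstep1]
  have hsplit : Finset.range m = Finset.range (q*M) ∪ Finset.Ico (q*M) m := by
    simp only [Finset.range_eq_Ico]
    rw [Finset.Ico_union_Ico_eq_Ico (Nat.zero_le _) (by omega)]
  rw [hsplit, Finset.sum_union (by
    rw [Finset.range_eq_Ico]
    exact Finset.Ico_disjoint_Ico_consecutive 0 (q*M) m)]
  rw [blocksum q hq2 r hrq M, sum_G_mul q hq2 M]
  have htail : ∀ s ∈ Finset.Ico (q*M) m,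
      (if s % q = r then (0:ℝ) else Gprod q (s / q)) = Gprod q M := by
    intro s hs
    rw [Finset.mem_Ico] at hs
    obtain ⟨h1, h2⟩ := hs
    have hu : s - q*M < r := by omega
    have hmod : s % q < r := by
      have : s = q*M + (s - q*M) := by omega
      rw [this, Nat.mul_add_mod, Nat.mod_eq_of_lt (by omega)]
      omega
    have hdiv : s / q = M := by
      have : s = q*M + (s - q*M) := by omega
      rw [this, Nat.mul_add_div hq0, Nat.div_eq_of_lt (by omega), Nat.add_zero]
    rw [hdiv, if_neg (by omega)]
  rw [Finset.sum_congr rfl htail, Finset.sum_const, Nat.card_Ico]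
  have hcard : m - q*M = r := by omega
  rw [hcard]
  push_cast
  have : (m:ℝ) = q*M + r := by exact_mod_cast hmr.symm
  rw [this]
  ring

end realside

section mainind

variable (q : ℕ)

lemma acount_real (hq2 : 2 ≤ q) (m : ℕ)
    (ihm : ∀ j, (Hcount q m j : ℝ) =
      (m.factorial : ℝ) * ∑ s ∈ Finset.range (m+1),
        (if q ∣ (m + 1 - s + j) then (0:ℝ) else Gprod q (s / q))) :
    (Acount q (m+1) : ℝ) = ((m+1).factorial : ℝ) * Gprod q ((m+1) / q) := by
  rw [acount_succ_eq, ihm 0]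
  have h1 : ∀ s ∈ Finset.range (m+1),
      (if q ∣ (m + 1 - s + 0) then (0:ℝ) else Gprod q (s / q)) =
        (if q ∣ (m + 1 - s) then (0:ℝ) else Gprod q (s / q)) := by
    intro s _
    rw [Nat.add_zero]
  rw [Finset.sum_congr rfl h1, lemA q hq2 (m+1), Nat.factorial_succ]
  push_cast
  ring

lemma hcount_formula (hq2 : 2 ≤ q) (m : ℕ) : ∀ j,
    (Hcount q m j : ℝ) =
      (m.factorial : ℝ) * ∑ s ∈ Finset.range (m+1),
        (if q ∣ (m + 1 - s + j) then (0:ℝ) else Gprod q (s / q)) := by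
  induction m with
  | zero =>
    intro j
    rw [hcount_zero]
    simp only [Finset.sum_range_one, Nat.factorial_zero, Nat.cast_one, one_mul,
      Nat.zero_add, Nat.sub_zero, Nat.div_zero]
    have h0 : (0:ℕ) / q = 0 := Nat.zero_div q
    rw [h0, Gprod_zero]
    by_cases hd : q ∣ (1 + j)
    · rw [if_pos hd, if_pos hd, Nat.cast_zero]
    · rw [if_neg hd, if_neg hd, Nat.cast_one]
  | succ m ih =>
    intro j
    have hA := acount_real q hq2 m ih
    rw [hcount_succ, Nat.cast_add, Nat.cast_mul]
    have hcast : (((if q ∣ (j+1) then 0 else Acount q (m+1)) : ℕ) : ℝ)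
        = if q ∣ (j+1) then (0:ℝ) else ((m+1).factorial : ℝ) * Gprod q ((m+1) / q) := by
      split
      · rw [Nat.cast_zero]
      · rw [hA]
    rw [hcast, ih (j+1)]
    rw [Finset.sum_range_succ
      (fun s => if q ∣ m + 1 + 1 - s + j then (0:ℝ) else Gprod q (s / q)) (m+1)]
    have h2 : ∀ s ∈ Finset.range (m+1),
        (if q ∣ (m + 1 + 1 - s + j) then (0:ℝ) else Gprod q (s / q)) =
          (if q ∣ (m + 1 - s + (j + 1)) then (0:ℝ) else Gprod q (s / q)) := by
      intro s hs
      rw [Finset.mem_range] at hs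
      refine if_congr ?_ rfl rfl
      have : m + 1 + 1 - s + j = m + 1 - s + (j + 1) := by omega
      rw [this]
    rw [Finset.sum_congr rfl h2]
    have h3 : m + 1 + 1 - (m + 1) + j = j + 1 := by omega
    rw [h3]
    have h4 : ((m+1).factorial : ℝ) = ((m:ℝ) + 1) * (m.factorial : ℝ) := by
      rw [Nat.factorial_succ]; push_cast; ring
    rw [h4]
    by_cases hd : q ∣ (j+1)
    · rw [if_pos hd, if_pos hd]
      push_cast
      ring
    · rw [if_neg hd, if_neg hd]
      push_cast
      ring

end mainind
end ProbAux

theorem prob_order_not_divisible_by_prime_power (N p α : ℕ) (hp : p.Prime) (hα : 1 ≤ α)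
    (hq : p ^ α ≤ N) (hN : 0 < N) :
    ((Finset.univ.filter
        (fun π : Equiv.Perm (Fin N) => ¬ (p ^ α ∣ orderOf π))).card : ℝ) /
        (Nat.factorial N) =
      ∏ j ∈ Finset.Icc 1 (N / p ^ α), (1 - 1 / ((j : ℝ) * (p ^ α : ℕ))) := by
  obtain ⟨m, rfl⟩ : ∃ m, N = m + 1 := ⟨N - 1, by omega⟩
  set q := p ^ α with hqdef
  have hq2 : 2 ≤ q := Nat.one_lt_pow (by omega) hp.one_lt
  have hcount : (Finset.univ.filter
      (fun π : Equiv.Perm (Fin (m+1)) => ¬ (q ∣ orderOf π))).card = ProbAux.Acount q (m+1) := by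
    apply ProbAux.card_filter_iff'
    intro π
    rw [ProbAux.pow_dvd_orderOf_iff hp hα π]
    push_neg
    exact Iff.rfl
  rw [hcount]
  have hA := ProbAux.acount_real q hq2 m (ProbAux.hcount_formula q hq2 m)
  rw [hA]
  have hfac : ((m+1).factorial : ℝ) ≠ 0 := by
    exact_mod_cast (Nat.factorial_pos (m+1)).ne'
  rw [mul_comm, mul_div_assoc, div_self hfac, mul_one]
  rw [ProbAux.Gprod]
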